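/- Let h, σ > 0 and define k(p) = h·p/ln 2 − (h·p + σ)·log₂(1 + h·p/σ). Then k is strictly decreasing on [0, ∞) with k(0) = 0, so k(p) < 0 for all p > 0. Moreover, for any V > 0, B̃ < 0 and p > 0, one has Ξ(p) = 0 (where Ξ(p) = −B̃·log₂(1 + h·p/σ) − (h/((σ + h·p)·ln 2))·(V − B̃·p)) if and only if B̃·k(p) = h·V/ln 2. -/

import Mathlib

/-- The function `k(p) = hp/ln 2 − (hp + σ)·log₂(1 + hp/σ)` is strictly decreasing
on `[0, ∞)` with `k(0) = 0`, hence negative for `p > 0`; moreover for `V > 0`,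
`B̃ < 0` and `p > 0`, `Ξ(p) = 0` iff `B̃·k(p) = hV/ln 2`. -/
theorem stmt_13 (h σ : ℝ) (hh : 0 < h) (hσ : 0 < σ)
    (k : ℝ → ℝ)
    (hk : ∀ p, k p = h * p / Real.log 2
      - (h * p + σ) * Real.logb 2 (1 + h * p / σ)) :
    StrictAntiOn k (Set.Ici 0) ∧
    k 0 = 0 ∧
    (∀ p : ℝ, 0 < p → k p < 0) ∧
    (∀ V Btilde p : ℝ, 0 < V → Btilde < 0 → 0 < p →
      ((-Btilde * Real.logb 2 (1 + h * p / σ)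
        - (h / ((σ + h * p) * Real.log 2)) * (V - Btilde * p) = 0) ↔
       Btilde * k p = h * V / Real.log 2)) := by
  have hlog2 : 0 < Real.log 2 := Real.log_pos one_lt_two
  set g : ℝ → ℝ := fun p => h * p - (h * p + σ) * Real.log (1 + h * p / σ) with hg
  have hkg : ∀ p, k p = g p / Real.log 2 := by
    intro p
    rw [hk, Real.logb, hg]
    field_simp
  -- derivative of g for p ≥ 0
  have hgd : ∀ p : ℝ, 0 ≤ p →
      HasDerivAt g (-(h * Real.log (1 + h * p / σ))) p := by
    intro p hp
    have hu : (0:ℝ) < 1 + h * p / σ := by positivity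
    have h1 : HasDerivAt (fun p : ℝ => 1 + h * p / σ) (h / σ) p := by
      have heq : (fun p : ℝ => 1 + h * p / σ) = fun x : ℝ => 1 + h / σ * x := by
        funext x; ring
      rw [heq]
      simpa using ((hasDerivAt_id p).const_mul (h / σ)).const_add 1
    have h2 : HasDerivAt (fun p : ℝ => Real.log (1 + h * p / σ))
        ((h / σ) / (1 + h * p / σ)) p := h1.log (ne_of_gt hu)
    have h3 : HasDerivAt (fun p : ℝ => h * p + σ) h p := by
      simpa using ((hasDerivAt_id p).const_mul h).add_const σ
    have h4 : HasDerivAt (fun p : ℝ => (h * p + σ) * Real.log (1 + h * p / σ))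
        (h * Real.log (1 + h * p / σ) + (h * p + σ) * ((h / σ) / (1 + h * p / σ))) p :=
      h3.mul h2
    have h5 : HasDerivAt (fun p : ℝ => h * p) h p := by
      simpa using (hasDerivAt_id p).const_mul h
    have h6 := h5.sub h4
    have : (h * p + σ) * ((h / σ) / (1 + h * p / σ)) = h := by
      field_simp
      ring
    rw [this] at h6
    exact h6.congr_deriv (by ring)
  have hganti : StrictAntiOn g (Set.Ici 0) := by
    apply strictAntiOn_of_deriv_neg (convex_Ici 0)
    · exact fun p hp => ((hgd p hp).continuousAt).continuousWithinAt
    · intro p hp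
      rw [interior_Ici] at hp
      rw [(hgd p hp.le).deriv]
      have hu : (1:ℝ) < 1 + h * p / σ := by
        have : 0 < h * p / σ := div_pos (mul_pos hh hp) hσ
        linarith
      have := Real.log_pos hu
      nlinarith
  have hkanti : StrictAntiOn k (Set.Ici 0) := by
    intro a ha b hb hab
    rw [hkg, hkg]
    exact (div_lt_div_iff_of_pos_right hlog2).mpr (hganti ha hb hab)
  have hk0 : k 0 = 0 := by
    rw [hk]; simp
  have hkneg : ∀ p : ℝ, 0 < p → k p < 0 := fun p hp => by
    have := hkanti (Set.self_mem_Ici) (Set.mem_Ici.mpr hp.le) hp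
    rwa [hk0] at this
  refine ⟨hkanti, hk0, hkneg, ?_⟩
  intro V Btilde p hV hB hp
  have hσp : 0 < σ + h * p := by positivity
  have hu : (0:ℝ) < 1 + h * p / σ := by positivity
  have key : -Btilde * Real.logb 2 (1 + h * p / σ)
        - (h / ((σ + h * p) * Real.log 2)) * (V - Btilde * p)
      = (Btilde * k p * Real.log 2 - h * V) / ((σ + h * p) * Real.log 2) := by
    rw [hk, Real.logb]
    field_simp
    ring
  rw [key, div_eq_zero_iff]
  constructor
  · rintro (h1 | h1)
    · have : Btilde * k p * Real.log 2 = h * V := by linarith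
      field_simp
      linarith
    · exact absurd h1 (by positivity)
  · intro h1
    left
    rw [eq_div_iff (ne_of_gt hlog2)] at h1
    linarith
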